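/- Fix p > 0, θ₀ > 0, and I₀ > 0 satisfying I₀ < ((p+2)/(p+1)) (p+2)^{(p+1)/(p+2)} θ₀^{1/(p+2)}. Define, for t > 0, g(t) = I₀ (θ₀/(θ₀+t))^{(p+1)/(p+2)} + (p+2)^{(p+1)/(p+2)} t^{1/(p+2)} (t/(θ₀+t))^{(p+1)/(p+2)} − I₀. Then lim_{t→0⁺} g(t) = 0 and lim_{t→0⁺} g'(t) > 0; consequently there exists ε > 0 such that g(t) > 0 for all t ∈ (0, ε). -/

import Mathlib

open Real Filter

theorem g_positive_near_zero (p θ₀ I₀ : ℝ) (hp : 0 < p) (hθ : 0 < θ₀) (hI : 0 < I₀)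
    (hbound : I₀ < (p + 2) / (p + 1) * (p + 2) ^ ((p + 1) / (p + 2)) * θ₀ ^ (1 / (p + 2)))
    (g : ℝ → ℝ)
    (hg : ∀ t, g t = I₀ * (θ₀ / (θ₀ + t)) ^ ((p + 1) / (p + 2)) +
        (p + 2) ^ ((p + 1) / (p + 2)) * t ^ (1 / (p + 2)) * (t / (θ₀ + t)) ^ ((p + 1) / (p + 2))
        - I₀) :
    Tendsto g (nhdsWithin 0 (Set.Ioi 0)) (nhds 0) ∧
    (∃ L > 0, Tendsto (fun t => deriv g t) (nhdsWithin 0 (Set.Ioi 0)) (nhds L)) ∧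
    ∃ ε > 0, ∀ t ∈ Set.Ioo (0:ℝ) ε, 0 < g t := by
  set q : ℝ := (p + 1) / (p + 2) with hqdef
  set C : ℝ := (p + 2) ^ q with hCdef
  have hp2 : (0:ℝ) < p + 2 := by linarith
  have hp1 : (0:ℝ) < p + 1 := by linarith
  have hq : 0 < q := div_pos hp1 hp2
  have hC : 0 < C := Real.rpow_pos_of_pos hp2 _
  have hexp : 1 / (p + 2) + q = 1 := by rw [hqdef]; field_simp; ring
  -- the smooth extension
  set h : ℝ → ℝ := fun t => (I₀ * θ₀ ^ q + C * t) * (θ₀ + t) ^ (-q) - I₀ with hhdef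
  -- g = h on Ioi 0
  have hgh : ∀ t ∈ Set.Ioi (0:ℝ), g t = h t := by
    intro t ht
    have ht : (0:ℝ) < t := ht
    have hpos : 0 < θ₀ + t := by linarith
    have e1 : (θ₀ / (θ₀ + t)) ^ q = θ₀ ^ q * (θ₀ + t) ^ (-q) := by
      rw [Real.div_rpow hθ.le hpos.le, Real.rpow_neg hpos.le, div_eq_mul_inv]
    have e2 : t ^ (1 / (p + 2)) * (t / (θ₀ + t)) ^ q = t * (θ₀ + t) ^ (-q) := by
      rw [Real.div_rpow ht.le hpos.le, Real.rpow_neg hpos.le,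
        show t ^ (1 / (p + 2)) * (t ^ q / (θ₀ + t) ^ q)
          = t ^ (1 / (p + 2)) * t ^ q * ((θ₀ + t) ^ q)⁻¹ from by ring,
        ← Real.rpow_add ht, hexp, Real.rpow_one]
    rw [hg, hhdef]
    simp only []
    rw [e1]
    calc I₀ * (θ₀ ^ q * (θ₀ + t) ^ (-q)) + C * t ^ (1 / (p + 2)) * (t / (θ₀ + t)) ^ q - I₀
        = I₀ * (θ₀ ^ q * (θ₀ + t) ^ (-q)) + C * (t ^ (1 / (p + 2)) * (t / (θ₀ + t)) ^ q) - I₀ := by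
          ring
      _ = (I₀ * θ₀ ^ q + C * t) * (θ₀ + t) ^ (-q) - I₀ := by rw [e2]; ring
  -- derivative of h
  have hderiv : ∀ t : ℝ, 0 < θ₀ + t →
      HasDerivAt h (C * (θ₀ + t) ^ (-q) + (I₀ * θ₀ ^ q + C * t) * (-q * (θ₀ + t) ^ (-q - 1))) t := by
    intro t hpos
    have h1 : HasDerivAt (fun t : ℝ => I₀ * θ₀ ^ q + C * t) C t := by
      simpa using ((hasDerivAt_id t).const_mul C).const_add (I₀ * θ₀ ^ q)
    have h2 : HasDerivAt (fun t : ℝ => (θ₀ + t) ^ (-q)) (-q * (θ₀ + t) ^ (-q - 1)) t := by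
      have := (((hasDerivAt_id t).const_add θ₀).rpow_const (p := -q) (Or.inl hpos.ne'))
      simpa using this
    exact (h1.mul h2).sub_const I₀
  -- the limit value of deriv
  set L : ℝ := C * θ₀ ^ (-q) - q * I₀ * θ₀⁻¹ with hLdef
  have h5 : θ₀ ^ q * θ₀ ^ (-q - 1) = θ₀⁻¹ := by
    rw [← Real.rpow_add hθ, show q + (-q - 1) = -1 by ring, Real.rpow_neg_one]
  have hL0 : C * (θ₀ + 0) ^ (-q) + (I₀ * θ₀ ^ q + C * 0) * (-q * (θ₀ + 0) ^ (-q - 1)) = L := by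
    rw [add_zero, mul_zero, add_zero]
    calc C * θ₀ ^ (-q) + I₀ * θ₀ ^ q * (-q * θ₀ ^ (-q - 1))
        = C * θ₀ ^ (-q) - q * I₀ * (θ₀ ^ q * θ₀ ^ (-q - 1)) := by ring
      _ = L := by rw [h5, hLdef]
  have hLpos : 0 < L := by
    have key : q * I₀ * θ₀⁻¹ < C * θ₀ ^ (-q) := by
      have h1 : q * I₀ < q * ((p + 2) / (p + 1) * C * θ₀ ^ (1 / (p + 2))) :=
        (mul_lt_mul_iff_right₀ hq).2 hbound
      have h2 : q * ((p + 2) / (p + 1)) = 1 := by rw [hqdef]; field_simp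
      have h3 : θ₀ ^ (1 / (p + 2)) * θ₀⁻¹ = θ₀ ^ (-q) := by
        rw [← Real.rpow_neg_one θ₀, ← Real.rpow_add hθ]
        congr 1
        rw [hqdef]; field_simp; ring
      have h4 : q * I₀ * θ₀⁻¹ < q * ((p + 2) / (p + 1) * C * θ₀ ^ (1 / (p + 2))) * θ₀⁻¹ :=
        (mul_lt_mul_iff_left₀ (inv_pos.2 hθ)).2 h1
      calc q * I₀ * θ₀⁻¹ < q * ((p + 2) / (p + 1) * C * θ₀ ^ (1 / (p + 2))) * θ₀⁻¹ := h4
        _ = (q * ((p + 2) / (p + 1))) * C * (θ₀ ^ (1 / (p + 2)) * θ₀⁻¹) := by ring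
        _ = C * θ₀ ^ (-q) := by rw [h2, h3]; ring
    rw [hLdef]; linarith
  -- h 0 = 0
  have hh0 : h 0 = 0 := by
    rw [hhdef]
    simp only [mul_zero, add_zero]
    rw [mul_assoc, ← Real.rpow_add hθ, add_neg_cancel, Real.rpow_zero, mul_one]
    ring
  -- continuity of deriv-formula at 0
  set φ : ℝ → ℝ := fun t => C * (θ₀ + t) ^ (-q) + (I₀ * θ₀ ^ q + C * t) * (-q * (θ₀ + t) ^ (-q - 1))
    with hφdef
  have hcontφ : ContinuousAt φ 0 := by
    have hb : ContinuousAt (fun t : ℝ => θ₀ + t) 0 := by fun_prop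
    have hb0 : (θ₀ + 0) ≠ 0 := by positivity
    have c1 : ContinuousAt (fun t : ℝ => (θ₀ + t) ^ (-q)) 0 :=
      hb.rpow_const (Or.inl hb0)
    have c2 : ContinuousAt (fun t : ℝ => (θ₀ + t) ^ (-q - 1)) 0 :=
      hb.rpow_const (Or.inl hb0)
    exact ((continuousAt_const.mul continuousAt_id).const_add _ |> fun h => (continuousAt_const.mul c1).add (h.mul (continuousAt_const.mul c2)))
  -- eventually in 𝓝[>]0, things hold
  have hev : ∀ᶠ t in nhdsWithin (0:ℝ) (Set.Ioi 0), g t = h t ∧ deriv g t = φ t := by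
    filter_upwards [self_mem_nhdsWithin] with t ht
    have ht : (0:ℝ) < t := ht
    have hpos : 0 < θ₀ + t := by linarith
    refine ⟨hgh t ht, ?_⟩
    have heq : g =ᶠ[nhds t] h := by
      filter_upwards [IsOpen.mem_nhds (isOpen_Ioi (a := (0:ℝ))) ht] with s hs using hgh s hs
    rw [heq.deriv_eq]
    exact (hderiv t hpos).deriv
  have hconth : ContinuousAt h 0 := (hderiv 0 (by linarith)).continuousAt
  constructor
  · -- first part
    have hth : Tendsto h (nhdsWithin 0 (Set.Ioi 0)) (nhds 0) := by
      have := hconth.continuousWithinAt (s := Set.Ioi 0)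
      rwa [ContinuousWithinAt, hh0] at this
    refine hth.congr' ?_
    filter_upwards [hev] with t ht using ht.1.symm
  constructor
  · refine ⟨L, hLpos, ?_⟩
    have hφL : Tendsto φ (nhdsWithin 0 (Set.Ioi 0)) (nhds L) := by
      have hcw := hcontφ.continuousWithinAt (s := Set.Ioi 0)
      rw [ContinuousWithinAt] at hcw
      have hφ0 : φ 0 = L := by rw [hφdef]; exact hL0
      rwa [hφ0] at hcw
    refine hφL.congr' ?_
    filter_upwards [hev] with t ht using ht.2.symm
  · -- positivity near 0
    have hd0 : HasDerivAt h L 0 := by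
      have := hderiv 0 (by linarith)
      rwa [hL0] at this
    have hslope : Tendsto (fun t => h t / t) (nhdsWithin 0 (Set.Ioi 0)) (nhds L) := by
      have hdw := hd0.hasDerivWithinAt (s := Set.Ioi 0)
      have h2 := hasDerivWithinAt_iff_tendsto_slope.mp hdw
      have hsetsub : Set.Ioi (0:ℝ) \ {0} = Set.Ioi 0 := by
        ext x
        constructor
        · rintro ⟨h1, _⟩; exact h1
        · intro h1; exact ⟨h1, by simp [(Set.mem_Ioi.mp h1).ne']⟩
      rw [hsetsub] at h2
      refine h2.congr ?_
      intro t
      simp [slope_def_field, hh0, div_eq_mul_inv, mul_comm]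
    have hevpos : ∀ᶠ t in nhdsWithin (0:ℝ) (Set.Ioi 0), 0 < g t := by
      have hgt : ∀ᶠ t in nhdsWithin (0:ℝ) (Set.Ioi 0), L / 2 < h t / t :=
        Filter.Tendsto.eventually_const_lt (half_lt_self hLpos) hslope
      filter_upwards [hgt, self_mem_nhdsWithin, hev] with t h1 h2 h3
      have ht : (0:ℝ) < t := h2
      have hq0 : 0 < h t / t := lt_trans (half_pos hLpos) h1
      have := mul_pos hq0 ht
      rw [div_mul_cancel₀ _ ht.ne'] at this
      rw [h3.1]; exact this
    rcases (eventually_nhdsWithin_iff.mp hevpos).exists_mem with ⟨U, hU, hUP⟩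
    rcases Metric.mem_nhds_iff.mp hU with ⟨ε, hε, hball⟩
    refine ⟨ε, hε, fun t ht => ?_⟩
    have : t ∈ U := hball (by simp [Real.dist_eq, abs_of_pos ht.1]; linarith [ht.2, ht.1])
    exact hUP t this ht.1
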